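/- Let 1 ≤ k ≤ n. Any collection of pairwise weakly separated k-element subsets of {1,…,n} has cardinality at most k(n−k) + 1. -/

import Mathlib

/-- `X ≺ Y`: every element of `X` is less than every element of `Y`. -/
def Prec (X Y : Finset ℕ) : Prop := ∀ x ∈ X, ∀ y ∈ Y, x < y

/-- Two finite subsets `I, J` of `{1,…,n}` are weakly separated: either
`|I| ≥ |J|` and `J∖I` is partitioned as `J₁ ⊔ J₂` with `J₁ ≺ I∖J ≺ J₂`, or
symmetrically with `I` and `J` interchanged. -/
def WeaklySeparated (I J : Finset ℕ) : Prop :=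
  (J.card ≤ I.card ∧ ∃ J₁ J₂ : Finset ℕ, Disjoint J₁ J₂ ∧ J₁ ∪ J₂ = J \ I ∧
      Prec J₁ (I \ J) ∧ Prec (I \ J) J₂) ∨
  (I.card ≤ J.card ∧ ∃ I₁ I₂ : Finset ℕ, Disjoint I₁ I₂ ∧ I₁ ∪ I₂ = I \ J ∧
      Prec I₁ (J \ I) ∧ Prec (J \ I) I₂)

open Finset

lemma ws_symm {I J : Finset ℕ} (h : WeaklySeparated I J) : WeaklySeparated J I :=
  Or.symm h

lemma sdiff_insert_right' {I J : Finset ℕ} {m : ℕ} (hmI : m ∉ I) :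
    I \ insert m J = I \ J := by
  ext x
  simp only [mem_sdiff, mem_insert, not_or]
  constructor
  · rintro ⟨h1, _, h3⟩; exact ⟨h1, h3⟩
  · rintro ⟨h1, h2⟩
    exact ⟨h1, fun e => hmI (e ▸ h1), h2⟩

lemma insert_sdiff_left' {I J : Finset ℕ} {m : ℕ} (hmI : m ∉ I) :
    insert m J \ I = insert m (J \ I) := by
  ext x
  simp only [mem_sdiff, mem_insert]
  constructor
  · rintro ⟨h1 | h1, h2⟩
    · exact Or.inl h1
    · exact Or.inr ⟨h1, h2⟩
  · rintro (rfl | ⟨h1, h2⟩)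
    · exact ⟨Or.inl rfl, hmI⟩
    · exact ⟨Or.inr h1, h2⟩

/-- Dropping a common top element `m` from the second set preserves weak separation. -/
lemma ws_drop {I J : Finset ℕ} {m : ℕ} (hI : ∀ x ∈ I, x < m) (hJ : ∀ x ∈ J, x < m)
    (h : WeaklySeparated I (insert m J)) : WeaklySeparated I J := by
  have hmI : m ∉ I := fun hm => lt_irrefl m (hI m hm)
  have hmJ : m ∉ J := fun hm => lt_irrefl m (hJ m hm)
  have hd1 : insert m J \ I = insert m (J \ I) := insert_sdiff_left' hmI
  have hd2 : I \ insert m J = I \ J := sdiff_insert_right' hmI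
  have hcins : (insert m J).card = J.card + 1 := card_insert_of_notMem hmJ
  rcases h with ⟨hc, J₁, J₂, hdisj, huni, hp1, hp2⟩ | ⟨hc, I₁, I₂, hdisj, huni, hp1, hp2⟩
  · rw [hd1] at huni
    rw [hd2] at hp1 hp2
    rw [hcins] at hc
    have hmem : m ∈ J₁ ∪ J₂ := by rw [huni]; exact mem_insert_self m _
    rcases mem_union.1 hmem with hm1 | hm2
    · exfalso
      have hIJ : I ⊆ J := by
        intro y hy
        by_contra hyJ
        have h1 := hp1 m hm1 y (mem_sdiff.2 ⟨hy, hyJ⟩)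
        exact absurd h1 (not_lt.2 (le_of_lt (hI y hy)))
      have := card_le_card hIJ
      omega
    · have hmJ1 : m ∉ J₁ := disjoint_left.1 hdisj.symm hm2
      refine Or.inl ⟨by omega, J₁, J₂.erase m, hdisj.mono_right (erase_subset _ _), ?_, hp1,
        fun x hx y hy => hp2 x hx y (erase_subset _ _ hy)⟩
      have hkey : (J₁ ∪ J₂).erase m = J₁ ∪ J₂.erase m := by
        rw [erase_union_distrib, erase_eq_of_notMem hmJ1]
      rw [← hkey, huni]
      exact erase_insert (fun hmem' => hmJ (mem_sdiff.1 hmem').1)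
  · rw [hd2] at huni
    rw [hd1] at hp1 hp2
    rw [hcins] at hc
    have hI₂ : I₂ = ∅ := by
      rcases I₂.eq_empty_or_nonempty with h0 | ⟨y, hy⟩
      · exact h0
      · exfalso
        have h1 := hp2 m (mem_insert_self m _) y hy
        have hyI : y ∈ I := by
          have hy2 : y ∈ I₁ ∪ I₂ := mem_union_right _ hy
          rw [huni] at hy2
          exact (mem_sdiff.1 hy2).1
        exact absurd h1 (not_lt.2 (le_of_lt (hI y hyI)))
    subst hI₂
    rw [union_empty] at huni
    have hp1' : Prec I₁ (J \ I) := fun x hx y hy => hp1 x hx y (mem_insert_of_mem hy)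
    rcases le_or_gt I.card J.card with hle | hlt
    · exact Or.inr ⟨hle, I₁, ∅, disjoint_empty_right _, by rw [union_empty, huni], hp1',
        fun x hx y hy => absurd hy (notMem_empty y)⟩
    · refine Or.inl ⟨by omega, ∅, J \ I, disjoint_empty_left _, empty_union _,
        fun x hx => absurd hx (notMem_empty x), ?_⟩
      intro x hx y hy
      exact hp1' x (by rw [huni]; exact hx) y hy

lemma erase_sdiff_erase' {I J : Finset ℕ} {m : ℕ} (hmI : m ∈ I) :
    J.erase m \ I.erase m = J \ I := by
  ext x
  simp only [mem_sdiff, mem_erase, not_and]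
  constructor
  · rintro ⟨⟨hxm, hxJ⟩, h2⟩
    exact ⟨hxJ, fun hxI => absurd hxI (h2 hxm)⟩
  · rintro ⟨hxJ, hxI⟩
    exact ⟨⟨fun e => hxI (e ▸ hmI), hxJ⟩, fun _ => hxI⟩

/-- Erasing a common element preserves weak separation. -/
lemma ws_erase {I J : Finset ℕ} {m : ℕ} (hmI : m ∈ I) (hmJ : m ∈ J)
    (h : WeaklySeparated I J) : WeaklySeparated (I.erase m) (J.erase m) := by
  have h1 : J.erase m \ I.erase m = J \ I := erase_sdiff_erase' hmI
  have h2 : I.erase m \ J.erase m = I \ J := erase_sdiff_erase' hmJ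
  have c1 : (I.erase m).card = I.card - 1 := card_erase_of_mem hmI
  have c2 : (J.erase m).card = J.card - 1 := card_erase_of_mem hmJ
  have hI1 : 1 ≤ I.card := card_pos.2 ⟨m, hmI⟩
  have hJ1 : 1 ≤ J.card := card_pos.2 ⟨m, hmJ⟩
  rcases h with ⟨hc, J₁, J₂, d, u, p1, p2⟩ | ⟨hc, I₁, I₂, d, u, p1, p2⟩
  · exact Or.inl ⟨by omega, J₁, J₂, d, by rw [h1]; exact u,
      by rw [h2]; exact p1, by rw [h2]; exact p2⟩
  · exact Or.inr ⟨by omega, I₁, I₂, d, by rw [h2]; exact u,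
      by rw [h1]; exact p1, by rw [h1]; exact p2⟩

/-- If `insert m I` and `I'` are weakly separated, all elements `< m`,
and `|I'| ≤ |I|`, then `I'∖I ≺ I∖I'`. -/
lemma ws_dom {I I' : Finset ℕ} {m : ℕ} (hI : ∀ x ∈ I, x < m) (hI' : ∀ x ∈ I', x < m)
    (hc : I'.card ≤ I.card)
    (h : WeaklySeparated (insert m I) I') :
    ∀ x ∈ I' \ I, ∀ y ∈ I \ I', x < y := by
  have hmI : m ∉ I := fun hm => lt_irrefl m (hI m hm)
  have hmI' : m ∉ I' := fun hm => lt_irrefl m (hI' m hm)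
  rcases h with ⟨_, A, B, hd, hu, hp1, hp2⟩ | ⟨hc', _⟩
  · rw [sdiff_insert_right' hmI'] at hu
    rw [insert_sdiff_left' hmI'] at hp1 hp2
    have hB : B = ∅ := by
      rcases B.eq_empty_or_nonempty with h0 | ⟨y, hy⟩
      · exact h0
      · exfalso
        have h1 := hp2 m (mem_insert_self m _) y hy
        have hyI' : y ∈ I' := by
          have hy2 : y ∈ A ∪ B := mem_union_right _ hy
          rw [hu] at hy2
          exact (mem_sdiff.1 hy2).1
        exact absurd h1 (not_lt.2 (le_of_lt (hI' y hyI')))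
    subst hB
    rw [union_empty] at hu
    intro x hx y hy
    exact hp1 x (by rw [hu]; exact hx) y (mem_insert_of_mem hy)
  · exfalso
    rw [card_insert_of_notMem hmI] at hc'
    omega

lemma sum_step (m a k : ℕ) :
    ∑ j ∈ Finset.range k, (m + 1 - max a j)
      = (min k (m + 1) - a) + ∑ j ∈ Finset.range k, (m - max (a - 1) j) := by
  have h1 : ∀ j ∈ Finset.range k,
      m + 1 - max a j = (m - max (a - 1) j) + (if a ≤ j ∧ j ≤ m then 1 else 0) := by
    intro j _
    split_ifs with h <;> omega
  rw [Finset.sum_congr rfl h1, Finset.sum_add_distrib]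
  have h2 : (∑ j ∈ Finset.range k, if a ≤ j ∧ j ≤ m then 1 else 0)
      = ((Finset.range k).filter (fun j => a ≤ j ∧ j ≤ m)).card :=
    (Finset.card_filter _ _).symm
  have h3 : (Finset.range k).filter (fun j => a ≤ j ∧ j ≤ m)
      = Finset.Ico a (min k (m + 1)) := by
    ext j
    simp only [Finset.mem_filter, Finset.mem_range, Finset.mem_Ico, lt_min_iff]
    omega
  rw [h2, h3, Nat.card_Ico]
  omega

lemma key : ∀ (m a k : ℕ) (C : Finset (Finset ℕ)),
    (∀ I ∈ C, I ⊆ Finset.Icc 1 m) →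
    (∀ I ∈ C, a ≤ I.card ∧ I.card ≤ k) →
    (∀ I ∈ C, ∀ J ∈ C, WeaklySeparated I J) →
    C.card ≤ 1 + ∑ j ∈ Finset.range k, (m - max a j) := by
  intro m
  induction m with
  | zero =>
    intro a k C hsub hcard hws
    have hsub1 : C ⊆ {∅} := by
      intro I hI
      rw [mem_singleton]
      have h1 := hsub I hI
      rwa [show Finset.Icc 1 0 = ∅ from Finset.Icc_eq_empty (by omega), subset_empty] at h1
    have h2 := card_le_card hsub1
    simp only [card_singleton] at h2
    omega
  | succ m ih =>
    intro a k C hsub hcard hws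
    classical
    set C₀ := C.filter (fun I => (m+1) ∉ I) with hC₀def
    set C₁ := C.filter (fun I => (m+1) ∈ I) with hC₁def
    set C₁' := C₁.image (fun I => I.erase (m+1)) with hC₁'def
    have hC₀mem : ∀ I ∈ C₀, I ∈ C ∧ (m+1) ∉ I := fun I hI => mem_filter.1 hI
    have hC₁'mem : ∀ I ∈ C₁', (m+1) ∉ I ∧ insert (m+1) I ∈ C := by
      intro I hI
      obtain ⟨J, hJ, rfl⟩ := mem_image.1 hI
      obtain ⟨hJC, hJm⟩ := mem_filter.1 hJ
      exact ⟨notMem_erase _ _, by rw [insert_erase hJm]; exact hJC⟩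
    have hsubm : ∀ I : Finset ℕ, I ⊆ Finset.Icc 1 (m+1) → (m+1) ∉ I →
        I ⊆ Finset.Icc 1 m := by
      intro I hI hmI x hx
      have h1 := hI hx
      rw [Finset.mem_Icc] at h1 ⊢
      have h2 : x ≠ m+1 := fun e => hmI (e ▸ hx)
      omega
    have hDsub : ∀ I ∈ C₀ ∪ C₁', I ⊆ Finset.Icc 1 m := by
      intro I hI
      rcases mem_union.1 hI with h | h
      · obtain ⟨h1, h2⟩ := hC₀mem I h
        exact hsubm I (hsub I h1) h2
      · obtain ⟨h1, h2⟩ := hC₁'mem I h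
        have h3 := hsub _ h2
        exact hsubm I (fun x hx => h3 (mem_insert_of_mem hx)) h1
    have hDlt : ∀ I ∈ C₀ ∪ C₁', ∀ x ∈ I, x < m + 1 := by
      intro I hI x hx
      have h1 := hDsub I hI hx
      rw [Finset.mem_Icc] at h1
      omega
    have hDcard : ∀ I ∈ C₀ ∪ C₁', a - 1 ≤ I.card ∧ I.card ≤ k := by
      intro I hI
      rcases mem_union.1 hI with h | h
      · obtain ⟨h1, _⟩ := hC₀mem I h
        have h2 := hcard I h1
        omega
      · obtain ⟨h1, h2⟩ := hC₁'mem I h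
        have h3 := hcard _ h2
        have h4 : (insert (m+1) I).card = I.card + 1 := card_insert_of_notMem h1
        omega
    have hDws : ∀ I ∈ C₀ ∪ C₁', ∀ J ∈ C₀ ∪ C₁', WeaklySeparated I J := by
      intro X hX Y hY
      have hXlt := hDlt X hX
      have hYlt := hDlt Y hY
      rcases mem_union.1 hX with hX0 | hX1 <;> rcases mem_union.1 hY with hY0 | hY1
      · exact hws X (hC₀mem X hX0).1 Y (hC₀mem Y hY0).1
      · exact ws_drop hXlt hYlt (hws X (hC₀mem X hX0).1 _ (hC₁'mem Y hY1).2)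
      · exact ws_symm (ws_drop hYlt hXlt (hws Y (hC₀mem Y hY0).1 _ (hC₁'mem X hX1).2))
      · have h := hws _ (hC₁'mem X hX1).2 _ (hC₁'mem Y hY1).2
        have h2 := ws_erase (mem_insert_self (m+1) X) (mem_insert_self (m+1) Y) h
        rwa [erase_insert (hC₁'mem X hX1).1, erase_insert (hC₁'mem Y hY1).1] at h2
    have hdisj01 : Disjoint C₀ C₁ := by
      rw [Finset.disjoint_left]
      intro X h0 h1
      exact (mem_filter.1 h0).2 (mem_filter.1 h1).2
    have hun01 : C₀ ∪ C₁ = C := by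
      ext X
      simp only [hC₀def, hC₁def, mem_union, mem_filter]
      tauto
    have hsplitc : C₀.card + C₁.card = C.card := by
      rw [← card_union_of_disjoint hdisj01, hun01]
    have hinj : Set.InjOn (fun I : Finset ℕ => I.erase (m+1)) C₁ := by
      intro X hX Y hY hXY
      have hXm := (mem_filter.1 hX).2
      have hYm := (mem_filter.1 hY).2
      have h1 := congrArg (insert (m+1)) hXY
      simpa [insert_erase hXm, insert_erase hYm] using h1
    have hc1 : C₁'.card = C₁.card := card_image_of_injOn hinj
    have hDO : (C₀ ∪ C₁').card + (C₀ ∩ C₁').card = C₀.card + C₁'.card :=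
      card_union_add_card_inter _ _
    have hOcard : (C₀ ∩ C₁').card ≤ min k (m+1) - a := by
      have hinjO : Set.InjOn (fun I : Finset ℕ => I.card) ↑(C₀ ∩ C₁') := by
        intro X hX Y hY hXY
        simp only at hXY
        have hX' := mem_coe.1 hX
        have hY' := mem_coe.1 hY
        have hX0 := hC₀mem X (mem_of_mem_inter_left hX')
        have hX1 := hC₁'mem X (mem_of_mem_inter_right hX')
        have hY0 := hC₀mem Y (mem_of_mem_inter_left hY')
        have hY1 := hC₁'mem Y (mem_of_mem_inter_right hY')
        have hXlt : ∀ x ∈ X, x < m+1 := hDlt X (mem_union_left _ (mem_of_mem_inter_left hX'))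
        have hYlt : ∀ x ∈ Y, x < m+1 := hDlt Y (mem_union_left _ (mem_of_mem_inter_left hY'))
        by_contra hne
        have k1 : ∀ x ∈ Y \ X, ∀ y ∈ X \ Y, x < y :=
          ws_dom hXlt hYlt (le_of_eq hXY.symm) (hws _ hX1.2 _ hY0.1)
        have k2 : ∀ x ∈ X \ Y, ∀ y ∈ Y \ X, x < y :=
          ws_dom hYlt hXlt (le_of_eq hXY) (hws _ hY1.2 _ hX0.1)
        have hne1 : (X \ Y).Nonempty := by
          rw [sdiff_nonempty]
          intro hsub'
          exact hne (eq_of_subset_of_card_le hsub' (le_of_eq hXY.symm))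
        have hne2 : (Y \ X).Nonempty := by
          rw [sdiff_nonempty]
          intro hsub'
          exact hne (eq_of_subset_of_card_le hsub' (le_of_eq hXY)).symm
        obtain ⟨x, hx⟩ := hne1
        obtain ⟨y, hy⟩ := hne2
        have l1 := k1 y hy x hx
        have l2 := k2 x hx y hy
        omega
      have himg : (C₀ ∩ C₁').image (fun I => I.card) ⊆ Finset.Ico a (min k (m+1)) := by
        intro c hcmem
        obtain ⟨X, hX, rfl⟩ := mem_image.1 hcmem
        have hX0 := hC₀mem X (mem_of_mem_inter_left hX)
        have hX1 := hC₁'mem X (mem_of_mem_inter_right hX)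
        have h1 := hcard X hX0.1
        have h2 := hcard _ hX1.2
        have h3 : (insert (m+1) X).card = X.card + 1 := card_insert_of_notMem hX1.1
        have h4 : X ⊆ Finset.Icc 1 m := hDsub X (mem_union_left _ (mem_of_mem_inter_left hX))
        have h5 : X.card ≤ m := by
          have h6 := card_le_card h4
          simpa [Nat.card_Icc] using h6
        rw [Finset.mem_Ico, lt_min_iff]
        omega
      calc (C₀ ∩ C₁').card = ((C₀ ∩ C₁').image (fun I => I.card)).card :=
            (card_image_of_injOn hinjO).symm
        _ ≤ (Finset.Ico a (min k (m+1))).card := card_le_card himg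
        _ = min k (m+1) - a := Nat.card_Ico _ _
    have hIH := ih (a-1) k (C₀ ∪ C₁') hDsub hDcard hDws
    have harith := sum_step m a k
    omega

theorem card_le_of_pairwise_weaklySeparated (n k : ℕ) (hk : 1 ≤ k) (hkn : k ≤ n)
    (𝒞 : Finset (Finset ℕ))
    (hsub : ∀ I ∈ 𝒞, I ⊆ Finset.Icc 1 n) (hcard : ∀ I ∈ 𝒞, I.card = k)
    (hws : ∀ I ∈ 𝒞, ∀ J ∈ 𝒞, WeaklySeparated I J) :
    𝒞.card ≤ k * (n - k) + 1 := by
  have h := key n k k 𝒞 hsub (fun I hI => by rw [hcard I hI]; exact ⟨le_refl k, le_refl k⟩) hws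
  have hsum : ∑ j ∈ Finset.range k, (n - max k j) = k * (n - k) := by
    have hterm : ∀ j ∈ Finset.range k, n - max k j = n - k := by
      intro j hj
      rw [max_eq_left (le_of_lt (Finset.mem_range.1 hj))]
    rw [Finset.sum_congr rfl hterm, Finset.sum_const, Finset.card_range, smul_eq_mul]
  omega
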